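/- (Implicit gradient accuracy.) Let f : ℝ^d → ℝ be B-Lipschitz and L-smooth, and ĝ : ℝ^d → ℝ have ρ-Lipschitz Hessian, with λ > 0 such that λI + ∇²ĝ(x) ⪰ μI for all x. Let φ* ∈ ℝ^d and define the exact implicit gradient d* := (I + (1/λ)∇²ĝ(φ*))⁻¹ ∇f(φ*). Suppose φ satisfies ‖φ - φ*‖ ≤ δ with δ < μ/(2ρ), and g satisfies ‖g - (I + (1/λ)∇²ĝ(φ))⁻¹ ∇f(φ)‖ ≤ δ'. Then ‖g - d*‖ ≤ (2λρB/μ² + λL/μ)δ + δ'. -/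

import Mathlib

set_option maxHeartbeats 1000000

open scoped RealInnerProductSpace

/-- Implicit gradient accuracy (Lemma 2 of iMAML): approximation error of the
computed meta-gradient against the exact implicit gradient. -/
theorem stmt_7 {d : ℕ}
    (f g : EuclideanSpace ℝ (Fin d) → ℝ)
    (B L ρ lam μ δ δ' : ℝ)
    (hB : 0 ≤ B) (hL : 0 ≤ L) (hρ : 0 < ρ) (hlam : 0 < lam) (hμ : 0 < μ)
    (hδ0 : 0 ≤ δ) (hδ'0 : 0 ≤ δ')
    (hf : Differentiable ℝ f)
    (hfB : ∀ x : EuclideanSpace ℝ (Fin d), ‖gradient f x‖ ≤ B)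
    (hfL : ∀ x y : EuclideanSpace ℝ (Fin d),
      ‖gradient f x - gradient f y‖ ≤ L * ‖x - y‖)
    (H : EuclideanSpace ℝ (Fin d) →
      EuclideanSpace ℝ (Fin d) →L[ℝ] EuclideanSpace ℝ (Fin d))
    (hH : ∀ x, HasFDerivAt (gradient g) (H x) x)
    (hHsa : ∀ x, IsSelfAdjoint (H x))
    (hHLip : ∀ x y : EuclideanSpace ℝ (Fin d), ‖H x - H y‖ ≤ ρ * ‖x - y‖)
    (hsc : ∀ (x v : EuclideanSpace ℝ (Fin d)),
      μ * ‖v‖ ^ 2 ≤ ⟪(lam • (1 : EuclideanSpace ℝ (Fin d) →L[ℝ] EuclideanSpace ℝ (Fin d)) + H x) v, v⟫)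
    (φstar φ gvec : EuclideanSpace ℝ (Fin d))
    (hclose : ‖φ - φstar‖ ≤ δ) (hδ : δ < μ / (2 * ρ))
    (hg : ‖gvec - Ring.inverse
        ((1 : EuclideanSpace ℝ (Fin d) →L[ℝ] EuclideanSpace ℝ (Fin d)) + (1 / lam) • H φ)
        (gradient f φ)‖ ≤ δ') :
    ‖gvec - Ring.inverse
        ((1 : EuclideanSpace ℝ (Fin d) →L[ℝ] EuclideanSpace ℝ (Fin d)) + (1 / lam) • H φstar)
        (gradient f φstar)‖ ≤
      (2 * lam * ρ * B / μ ^ 2 + lam * L / μ) * δ + δ' := by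
  have hT : ∀ x : (EuclideanSpace ℝ (Fin d)), lam • (((1 : (EuclideanSpace ℝ (Fin d)) →L[ℝ] (EuclideanSpace ℝ (Fin d))) + (1/lam) • H x)) = lam • (1 : (EuclideanSpace ℝ (Fin d)) →L[ℝ] (EuclideanSpace ℝ (Fin d))) + H x := by
    intro x
    rw [smul_add, smul_smul, mul_one_div_cancel hlam.ne', one_smul]
  -- coercivity lower bound
  have hlow : ∀ (x v : (EuclideanSpace ℝ (Fin d))), μ / lam * ‖v‖ ≤ ‖((1 : (EuclideanSpace ℝ (Fin d)) →L[ℝ] (EuclideanSpace ℝ (Fin d))) + (1/lam) • H x) v‖ := by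
    intro x v
    have h1 := hsc x v
    rw [← hT x] at h1
    have h2 : ⟪(lam • ((1 : (EuclideanSpace ℝ (Fin d)) →L[ℝ] (EuclideanSpace ℝ (Fin d))) + (1/lam) • H x)) v, v⟫
        = lam * ⟪((1 : (EuclideanSpace ℝ (Fin d)) →L[ℝ] (EuclideanSpace ℝ (Fin d))) + (1/lam) • H x) v, v⟫ := by
      rw [ContinuousLinearMap.smul_apply, real_inner_smul_left]
    rw [h2] at h1
    have h3 := real_inner_le_norm (((1 : (EuclideanSpace ℝ (Fin d)) →L[ℝ] (EuclideanSpace ℝ (Fin d))) + (1/lam) • H x) v) v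
    rcases eq_or_lt_of_le (norm_nonneg v) with hv | hv
    · rw [← hv, mul_zero]; exact norm_nonneg _
    · rw [div_mul_eq_mul_div, div_le_iff₀ hlam]
      nlinarith [norm_nonneg (((1 : (EuclideanSpace ℝ (Fin d)) →L[ℝ] (EuclideanSpace ℝ (Fin d))) + (1/lam) • H x) v)]
  have hinj : ∀ x : (EuclideanSpace ℝ (Fin d)), Function.Injective ((1 : (EuclideanSpace ℝ (Fin d)) →L[ℝ] (EuclideanSpace ℝ (Fin d))) + (1/lam) • H x) := by
    intro x u v huv
    have h1 := hlow x (u - v)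
    rw [map_sub, huv, sub_self, norm_zero] at h1
    have h2 : ‖u - v‖ ≤ 0 := by
      have := div_pos hμ hlam
      nlinarith [norm_nonneg (u - v)]
    rw [← sub_eq_zero, ← norm_le_zero_iff]
    exact h2
  have hunit : ∀ x : (EuclideanSpace ℝ (Fin d)), IsUnit ((1 : (EuclideanSpace ℝ (Fin d)) →L[ℝ] (EuclideanSpace ℝ (Fin d))) + (1/lam) • H x) := by
    intro x
    have hbij : Function.Bijective (((1 : (EuclideanSpace ℝ (Fin d)) →L[ℝ] (EuclideanSpace ℝ (Fin d))) + (1/lam) • H x) : (EuclideanSpace ℝ (Fin d)) →ₗ[ℝ] (EuclideanSpace ℝ (Fin d))) :=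
      ⟨hinj x, LinearMap.injective_iff_surjective.mp (hinj x)⟩
    exact ⟨((LinearEquiv.ofBijective _ hbij).toContinuousLinearEquiv).toUnit, by ext v; rfl⟩
  -- norm bound on the inverse
  have hSle : ∀ x : (EuclideanSpace ℝ (Fin d)), ‖Ring.inverse ((1 : (EuclideanSpace ℝ (Fin d)) →L[ℝ] (EuclideanSpace ℝ (Fin d))) + (1/lam) • H x)‖ ≤ lam / μ := by
    intro x
    apply ContinuousLinearMap.opNorm_le_bound _ (le_of_lt (div_pos hlam hμ))
    intro w
    set v := Ring.inverse ((1 : (EuclideanSpace ℝ (Fin d)) →L[ℝ] (EuclideanSpace ℝ (Fin d))) + (1/lam) • H x) w with hv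
    have hTv : ((1 : (EuclideanSpace ℝ (Fin d)) →L[ℝ] (EuclideanSpace ℝ (Fin d))) + (1/lam) • H x) v = w := by
      have h := Ring.mul_inverse_cancel _ (hunit x)
      calc ((1 : (EuclideanSpace ℝ (Fin d)) →L[ℝ] (EuclideanSpace ℝ (Fin d))) + (1/lam) • H x) v
          = (((1 : (EuclideanSpace ℝ (Fin d)) →L[ℝ] (EuclideanSpace ℝ (Fin d))) + (1/lam) • H x) * Ring.inverse ((1 : (EuclideanSpace ℝ (Fin d)) →L[ℝ] (EuclideanSpace ℝ (Fin d))) + (1/lam) • H x)) w := rfl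
        _ = w := by rw [h]; rfl
    have h1 := hlow x v
    rw [hTv, div_mul_eq_mul_div, div_le_iff₀ hlam] at h1
    rw [div_mul_eq_mul_div, le_div_iff₀ hμ]
    nlinarith
  -- resolvent identity
  have key : Ring.inverse ((1 : (EuclideanSpace ℝ (Fin d)) →L[ℝ] (EuclideanSpace ℝ (Fin d))) + (1/lam) • H φ)
        * (((1 : (EuclideanSpace ℝ (Fin d)) →L[ℝ] (EuclideanSpace ℝ (Fin d))) + (1/lam) • H φstar) - ((1 : (EuclideanSpace ℝ (Fin d)) →L[ℝ] (EuclideanSpace ℝ (Fin d))) + (1/lam) • H φ))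
        * Ring.inverse ((1 : (EuclideanSpace ℝ (Fin d)) →L[ℝ] (EuclideanSpace ℝ (Fin d))) + (1/lam) • H φstar)
      = Ring.inverse ((1 : (EuclideanSpace ℝ (Fin d)) →L[ℝ] (EuclideanSpace ℝ (Fin d))) + (1/lam) • H φ)
        - Ring.inverse ((1 : (EuclideanSpace ℝ (Fin d)) →L[ℝ] (EuclideanSpace ℝ (Fin d))) + (1/lam) • H φstar) := by
    simp only [mul_sub, sub_mul, mul_assoc]
    rw [Ring.mul_inverse_cancel _ (hunit φstar), mul_one, ← mul_assoc,
      Ring.inverse_mul_cancel _ (hunit φ), one_mul]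
  -- norm of operator difference
  have hTdiff : ‖(((1 : (EuclideanSpace ℝ (Fin d)) →L[ℝ] (EuclideanSpace ℝ (Fin d))) + (1/lam) • H φstar) - ((1 : (EuclideanSpace ℝ (Fin d)) →L[ℝ] (EuclideanSpace ℝ (Fin d))) + (1/lam) • H φ))‖
      ≤ ρ / lam * δ := by
    have h1 : (((1 : (EuclideanSpace ℝ (Fin d)) →L[ℝ] (EuclideanSpace ℝ (Fin d))) + (1/lam) • H φstar) - ((1 : (EuclideanSpace ℝ (Fin d)) →L[ℝ] (EuclideanSpace ℝ (Fin d))) + (1/lam) • H φ))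
        = (1/lam) • (H φstar - H φ) := by
      rw [smul_sub]; abel
    rw [h1, norm_smul (α := ℝ) (1/lam) (H φstar - H φ), Real.norm_eq_abs, abs_div, abs_one, abs_of_pos hlam]
    have h2 : ‖H φstar - H φ‖ ≤ ρ * δ := by
      calc ‖H φstar - H φ‖ ≤ ρ * ‖φstar - φ‖ := hHLip φstar φ
        _ ≤ ρ * δ := by rw [norm_sub_rev]; exact mul_le_mul_of_nonneg_left hclose hρ.le
    calc 1 / lam * ‖H φstar - H φ‖ ≤ 1 / lam * (ρ * δ) := by
          exact mul_le_mul_of_nonneg_left h2 (by positivity)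
      _ = ρ / lam * δ := by ring
  -- main estimate
  set S := Ring.inverse ((1 : (EuclideanSpace ℝ (Fin d)) →L[ℝ] (EuclideanSpace ℝ (Fin d))) + (1/lam) • H φ) with hS
  set Sstar := Ring.inverse ((1 : (EuclideanSpace ℝ (Fin d)) →L[ℝ] (EuclideanSpace ℝ (Fin d))) + (1/lam) • H φstar) with hSstar
  set a := gradient f φ
  set astar := gradient f φstar
  have hbound : ‖S a - Sstar astar‖ ≤ lam / μ * (L * δ) + lam / μ * (ρ / lam * δ) * (lam / μ) * B := by
    have h1 : S a - Sstar astar = S (a - astar) + (S - Sstar) astar := by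
      rw [map_sub, ContinuousLinearMap.sub_apply]; abel
    rw [h1]
    have h2 : ‖S (a - astar)‖ ≤ lam / μ * (L * δ) := by
      calc ‖S (a - astar)‖ ≤ ‖S‖ * ‖a - astar‖ := S.le_opNorm _
        _ ≤ lam / μ * (L * δ) := by
            apply mul_le_mul (hSle φ) _ (norm_nonneg _) (by positivity)
            calc ‖a - astar‖ ≤ L * ‖φ - φstar‖ := hfL φ φstar
              _ ≤ L * δ := mul_le_mul_of_nonneg_left hclose hL
    have h3 : ‖(S - Sstar) astar‖ ≤ lam / μ * (ρ / lam * δ) * (lam / μ) * B := by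
      calc ‖(S - Sstar) astar‖ ≤ ‖S - Sstar‖ * ‖astar‖ := (S - Sstar).le_opNorm _
        _ ≤ lam / μ * (ρ / lam * δ) * (lam / μ) * B := by
            apply mul_le_mul _ (hfB φstar) (norm_nonneg _) (by positivity)
            rw [← key]
            calc ‖S * (((1 : (EuclideanSpace ℝ (Fin d)) →L[ℝ] (EuclideanSpace ℝ (Fin d))) + (1/lam) • H φstar) - ((1 : (EuclideanSpace ℝ (Fin d)) →L[ℝ] (EuclideanSpace ℝ (Fin d))) + (1/lam) • H φ)) * Sstar‖
                ≤ ‖S * (((1 : (EuclideanSpace ℝ (Fin d)) →L[ℝ] (EuclideanSpace ℝ (Fin d))) + (1/lam) • H φstar) - ((1 : (EuclideanSpace ℝ (Fin d)) →L[ℝ] (EuclideanSpace ℝ (Fin d))) + (1/lam) • H φ))‖ * ‖Sstar‖ :=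
                  norm_mul_le _ _
              _ ≤ ‖S‖ * ‖(((1 : (EuclideanSpace ℝ (Fin d)) →L[ℝ] (EuclideanSpace ℝ (Fin d))) + (1/lam) • H φstar) - ((1 : (EuclideanSpace ℝ (Fin d)) →L[ℝ] (EuclideanSpace ℝ (Fin d))) + (1/lam) • H φ))‖ * ‖Sstar‖ := by
                  exact mul_le_mul_of_nonneg_right (norm_mul_le _ _) (norm_nonneg _)
              _ ≤ lam / μ * (ρ / lam * δ) * (lam / μ) := by
                  apply mul_le_mul _ (hSle φstar) (norm_nonneg _) (by positivity)
                  exact mul_le_mul (hSle φ) hTdiff (norm_nonneg _) (by positivity)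
    calc ‖S (a - astar) + (S - Sstar) astar‖ ≤ ‖S (a - astar)‖ + ‖(S - Sstar) astar‖ :=
          norm_add_le _ _
      _ ≤ _ := add_le_add h2 h3
  have htri : ‖gvec - Sstar astar‖ ≤ δ' + ‖S a - Sstar astar‖ := by
    calc ‖gvec - Sstar astar‖ = ‖(gvec - S a) + (S a - Sstar astar)‖ := by
          congr 1; abel
      _ ≤ ‖gvec - S a‖ + ‖S a - Sstar astar‖ := norm_add_le _ _
      _ ≤ δ' + ‖S a - Sstar astar‖ := add_le_add_left hg _
  have hfinal : lam / μ * (L * δ) + lam / μ * (ρ / lam * δ) * (lam / μ) * B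
      ≤ (2 * lam * ρ * B / μ ^ 2 + lam * L / μ) * δ := by
    have heq : (2 * lam * ρ * B / μ ^ 2 + lam * L / μ) * δ
        - (lam / μ * (L * δ) + lam / μ * (ρ / lam * δ) * (lam / μ) * B)
        = lam * ρ * B / μ ^ 2 * δ := by
      field_simp
      ring
    nlinarith [mul_nonneg (div_nonneg (by positivity : (0:ℝ) ≤ lam * ρ * B) (by positivity : (0:ℝ) ≤ μ ^ 2)) hδ0]
  linarith
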